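/- If G is a finite group and A, B are nonempty subsets of G, then |A·B| ≥ min{p(G), |A|+|B|-1}. -/

import Mathlib

open Pointwise

/-- `p(G)`: the smallest prime divisor of `|G|`, or `∞` if `G` is trivial. -/
noncomputable def pMul (G : Type*) [Group G] : ℕ∞ :=
  if Nat.card G = 1 then ⊤ else (Nat.card G).minFac

theorem cauchy_davenport_finite_groups (G : Type*) [Group G] [Fintype G]
    [DecidableEq G] (A B : Finset G) (hA : A.Nonempty) (hB : B.Nonempty) :
    min (pMul G) ((A.card + B.card - 1 : ℕ) : ℕ∞) ≤ ((A * B).card : ℕ∞) := by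
  refine le_trans (min_le_min_right _ ?_) (cauchy_davenport_minOrder_mul hA hB)
  unfold pMul
  split_ifs with h
  · have : Subsingleton G := (Nat.card_eq_one_iff_unique.mp h).1
    rw [top_le_iff, Monoid.minOrder_eq_top]
  · rw [Monoid.le_minOrder]
    intro a ha ha'
    have h2 : 2 ≤ orderOf a := by
      rcases Nat.lt_or_ge (orderOf a) 2 with hlt | hge
      · interval_cases h' : orderOf a
        · exact absurd (orderOf_eq_zero_iff.mp h') (not_not.mpr ha')
        · exact absurd (orderOf_eq_one_iff.mp h') ha
      · exact hge
    have hdvd : orderOf a ∣ Nat.card G := orderOf_dvd_natCard a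
    exact_mod_cast Nat.minFac_le_of_dvd h2 hdvd
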